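/- Let α be an irrational real number and H an additive subgroup of ℚ with 1 ∈ H. Then ℚ(H + αℤ, 1) = H; that is, {x ∈ H + αℤ : there exist a natural number m ≥ 1 and an integer q with m·x = q} equals H (viewed as a subset of ℝ). -/
import Mathlib


/-- The additive subgroup `H + αℤ` of `ℝ`, for an additive subgroup `H` of `ℚ` and a
real number `α`. -/
def mixZSubgroup (H : AddSubgroup ℚ) (α : ℝ) : AddSubgroup ℝ where
  carrier := {x : ℝ | ∃ h ∈ H, ∃ w : ℤ, x = (h : ℝ) + α * (w : ℝ)}
  zero_mem' := ⟨0, H.zero_mem, 0, by simp⟩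
  add_mem' := by
    rintro x y ⟨h1, hh1, w1, rfl⟩ ⟨h2, hh2, w2, rfl⟩
    exact ⟨h1 + h2, H.add_mem hh1 hh2, w1 + w2, by push_cast; ring⟩
  neg_mem' := by
    rintro x ⟨h, hh, w, rfl⟩
    exact ⟨-h, H.neg_mem hh, -w, by push_cast; ring⟩

/-- Lemma 4.5, "in particular": Let `α` be irrational and `H ≤ ℚ` with
`1 ∈ H`. Then `ℚ(H + αℤ, 1) = H`: the set of `x ∈ H + αℤ` with `m • x = q • 1` for
some `m ≥ 1`, `q ∈ ℤ`, equals `H` (viewed inside `ℝ`). -/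
theorem rationalSubgroup_of_mixZ_one
    (α : ℝ) (hα : Irrational α)
    (H : AddSubgroup ℚ) (h1H : (1 : ℚ) ∈ H) :
    {x : ℝ | x ∈ mixZSubgroup H α ∧ ∃ m : ℕ, 1 ≤ m ∧ ∃ q : ℤ, (m : ℝ) * x = (q : ℝ)}
      = {x : ℝ | ∃ h ∈ H, x = (h : ℝ)} := by
  ext x
  simp only [Set.mem_setOf_eq]
  constructor
  · rintro ⟨⟨h, hh, w, rfl⟩, m, hm, q, hq⟩
    have hw : w = 0 := by
      by_contra hw0
      apply hα
      refine ⟨(q - m * h) / (m * w), ?_⟩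
      have hm0 : (m : ℝ) ≠ 0 := Nat.cast_ne_zero.mpr (by omega)
      have hw0' : (w : ℝ) ≠ 0 := Int.cast_ne_zero.mpr hw0
      push_cast
      field_simp
      nlinarith [hq]
    subst hw
    exact ⟨h, hh, by simp⟩
  · rintro ⟨h, hh, rfl⟩
    refine ⟨⟨h, hh, 0, by simp⟩, h.den, h.pos, h.num, ?_⟩
    rw [mul_comm]
    exact_mod_cast congrArg (Rat.cast : ℚ → ℝ) (Rat.mul_den_eq_num h)
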